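/- Let n be a positive integer and let G be a connected graph with at most 4n−2 edges such that G → (nK₂, C₃). Suppose that for every positive integer k, every connected graph G′ with either fewer vertices than G, or the same number of vertices and fewer edges than G, satisfies G′ ↛ (kK₂, C₃) whenever G′ has at most 4k−2 edges. Then G has no cut edge, i.e., for every edge e of G the graph G − e is still connected. -/

import Mathlib

open SimpleGraph

/-- `G` contains a copy of `H`, i.e. there is an injective graph homomorphism from `H` to `G`. -/
def ContainsCopy {V W : Type*} (G : SimpleGraph V) (H : SimpleGraph W) : Prop :=
  ∃ f : H →g G, Function.Injective f

/-- `G` arrows `(G₁, G₂)`: for every red/blue colouring of the edges of `G`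
(given by a subgraph `R ≤ G` of red edges, the blue edges being `G \ R`),
there is a red copy of `G₁` or a blue copy of `G₂`. -/
def Arrows {V V₁ V₂ : Type*} (G : SimpleGraph V) (G₁ : SimpleGraph V₁) (G₂ : SimpleGraph V₂) :
    Prop :=
  ∀ R : SimpleGraph V, R ≤ G → ContainsCopy R G₁ ∨ ContainsCopy (G \ R) G₂

/-- The matching `nK₂` with `n` edges. -/
def Matching (n : ℕ) : SimpleGraph (Fin n × Fin 2) where
  Adj a b := a.1 = b.1 ∧ a.2 ≠ b.2
  symm := by refine ⟨?_⟩; intro a b h; exact ⟨h.1.symm, h.2.symm⟩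
  loopless := by refine ⟨?_⟩; intro a h; exact h.2 rfl

/-- `n` disjoint copies of the graph `H`. -/
def Copies (n : ℕ) {W : Type*} (H : SimpleGraph W) : SimpleGraph (Fin n × W) where
  Adj a b := a.1 = b.1 ∧ H.Adj a.2 b.2
  symm := by refine ⟨?_⟩; intro a b h; exact ⟨h.1.symm, h.2.symm⟩
  loopless := by refine ⟨?_⟩; intro a h; exact H.loopless.irrefl _ h.2

/-- Disjoint union of two graphs. -/
def DisjUnion {V W : Type*} (G : SimpleGraph V) (H : SimpleGraph W) : SimpleGraph (V ⊕ W) where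
  Adj a b :=
    match a, b with
    | Sum.inl x, Sum.inl y => G.Adj x y
    | Sum.inr x, Sum.inr y => H.Adj x y
    | _, _ => False
  symm := by
    refine ⟨?_⟩
    rintro (x | x) (y | y) h
    · exact G.symm.symm _ _ h
    · exact h.elim
    · exact h.elim
    · exact H.symm.symm _ _ h
  loopless := by
    refine ⟨?_⟩
    rintro (x | x) h
    · exact G.loopless.irrefl _ h
    · exact H.loopless.irrefl _ h

lemma matching_mono {V : Type*} {G : SimpleGraph V} {k m : ℕ} (hkm : k ≤ m)
    (h : ContainsCopy G (Matching m)) : ContainsCopy G (Matching k) := by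
  obtain ⟨f, hf⟩ := h
  refine ⟨⟨fun p => f (Fin.castLE hkm p.1, p.2), ?_⟩, ?_⟩
  · rintro ⟨i, c⟩ ⟨j, c'⟩ ⟨h1, h2⟩
    exact f.map_adj ⟨by simp_all, h2⟩
  · rintro ⟨i, c⟩ ⟨j, c'⟩ h
    have h2 := hf h
    simp only [Prod.mk.injEq] at h2 ⊢
    exact ⟨Fin.castLE_injective _ h2.1, h2.2⟩

lemma reachable_induce {V : Type*} {G : SimpleGraph V} {A : Set V}
    (hA : ∀ ⦃x y⦄, x ∈ A → G.Adj x y → y ∈ A) :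
    ∀ {x y : V}, G.Reachable x y → ∀ (hx : x ∈ A) (hy : y ∈ A),
      (G.induce A).Reachable ⟨x, hx⟩ ⟨y, hy⟩ := by
  intro x y h
  obtain ⟨p⟩ := h
  induction p with
  | nil => intro hx hy; exact Reachable.refl _
  | @cons x z y h' p ih =>
    intro hx hy
    have h2 : (G.induce A).Adj ⟨x, hx⟩ ⟨z, hA hx h'⟩ := by simpa using h'
    exact h2.reachable.trans (ih (hA hx h') hy)

lemma red_side {V : Type*} {R : SimpleGraph V} {A : Set V} {RA : SimpleGraph A} {k n : ℕ}
    (hcl : ∀ x y, R.Adj x y → x ∈ A → ∃ (hx : x ∈ A) (hy : y ∈ A), RA.Adj ⟨x, hx⟩ ⟨y, hy⟩)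
    (hk : ¬ ContainsCopy RA (Matching k))
    (f : Matching n →g R) (hf : Function.Injective f) (S : Finset (Fin n))
    (hS : ∀ i ∈ S, (f (i, 0) : V) ∈ A) :
    S.card < k := by
  by_contra hcon
  push_neg at hcon
  apply hk
  apply matching_mono hcon
  have hadj01 : ∀ i : Fin n, R.Adj (f (i, 0)) (f (i, 1)) := fun i =>
    f.map_adj ⟨rfl, (by decide : (0 : Fin 2) ≠ 1)⟩
  have hmem : ∀ i ∈ S, ∀ c : Fin 2, (f (i, c) : V) ∈ A := by
    intro i hi c
    obtain ⟨hx, hy, -⟩ := hcl _ _ (hadj01 i) (hS i hi)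
    fin_cases c
    · exact hx
    · exact hy
  have hadjA : ∀ i (hi : i ∈ S), ∀ c c' : Fin 2, c ≠ c' →
      RA.Adj ⟨f (i, c), hmem i hi c⟩ ⟨f (i, c'), hmem i hi c'⟩ := by
    intro i hi c c' hcc'
    have hR : R.Adj (f (i, c)) (f (i, c')) := f.map_adj ⟨rfl, hcc'⟩
    obtain ⟨hx, hy, hAdj⟩ := hcl _ _ hR (hmem i hi c)
    exact hAdj
  set e := S.orderIsoOfFin rfl with he
  refine ⟨⟨fun p => ⟨f ((e p.1 : Fin n), p.2), hmem _ (e p.1).2 p.2⟩, ?_⟩, ?_⟩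
  · rintro ⟨j, c⟩ ⟨j', c'⟩ ⟨h1, h2⟩
    simp only at h1
    subst h1
    exact hadjA _ (e j).2 c c' h2
  · rintro ⟨j, c⟩ ⟨j', c'⟩ h
    have h2 : f ((e j : Fin n), c) = f ((e j' : Fin n), c') := congrArg Subtype.val h
    have h3 := hf h2
    simp only [Prod.mk.injEq] at h3
    have h4 : (e j : Fin n) = (e j' : Fin n) := h3.1
    have h5 : j = j' := e.injective (Subtype.ext h4)
    simp [h5, h3.2]

lemma blue_side {V : Type*} {Gb : SimpleGraph V} {A : Set V} {HA RA : SimpleGraph A}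
    (hcl : ∀ x y, Gb.Adj x y → ∀ (hx : x ∈ A) (hy : y ∈ A), (HA \ RA).Adj ⟨x, hx⟩ ⟨y, hy⟩)
    (g : cycleGraph 3 →g Gb) (hg : Function.Injective g)
    (hall : ∀ p, (g p : V) ∈ A) :
    ContainsCopy (HA \ RA) (cycleGraph 3) := by
  refine ⟨⟨fun p => ⟨g p, hall p⟩, ?_⟩, ?_⟩
  · intro p q hpq
    exact hcl _ _ (g.map_adj hpq) _ _
  · intro p q h
    exact hg (congrArg Subtype.val h)

/-- Under the minimality hypotheses, `G` has no cut edge: deleting any edge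
of `G` leaves a connected graph. -/
theorem no_cut_edge (n : ℕ) (hn : 0 < n) (V : Type) [Finite V]
    (G : SimpleGraph V) (hconn : G.Connected) (hE : G.edgeSet.ncard ≤ 4 * n - 2)
    (harrow : Arrows G (Matching n) (cycleGraph 3))
    (hmin : ∀ k : ℕ, 0 < k → ∀ (W : Type), Finite W → ∀ H : SimpleGraph W,
      H.Connected →
      (Nat.card W < Nat.card V ∨
        (Nat.card W = Nat.card V ∧ H.edgeSet.ncard < G.edgeSet.ncard)) →
      H.edgeSet.ncard ≤ 4 * k - 2 →
      ¬ Arrows H (Matching k) (cycleGraph 3)) :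
    ∀ e ∈ G.edgeSet, (G.deleteEdges {e}).Connected := by
  classical
  intro e he
  induction e using Sym2.ind with
  | _ u v =>
  by_contra hnc
  set G' := G.deleteEdges {s(u, v)} with hG'def
  have hG'le : G' ≤ G := deleteEdges_le _
  -- dichotomy of components
  have hstep : ∀ x y, G.Adj x y → (G'.Reachable u x ∨ G'.Reachable v x) →
      (G'.Reachable u y ∨ G'.Reachable v y) := by
    intro x y hxy hx
    by_cases hce : s(x, y) = s(u, v)
    · rw [Sym2.eq_iff] at hce
      rcases hce with ⟨rfl, rfl⟩ | ⟨rfl, rfl⟩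
      · exact Or.inr (Reachable.refl _)
      · exact Or.inl (Reachable.refl _)
    · have hadj : G'.Adj x y := by
        rw [hG'def, deleteEdges_adj]
        exact ⟨hxy, by simpa using hce⟩
      rcases hx with h | h
      · exact Or.inl (h.trans hadj.reachable)
      · exact Or.inr (h.trans hadj.reachable)
  have hdich : ∀ w, G'.Reachable u w ∨ G'.Reachable v w := by
    intro w
    obtain ⟨p⟩ := hconn.preconnected u w
    have key : ∀ {x w : V} (_ : G.Walk x w), (G'.Reachable u x ∨ G'.Reachable v x) →
        (G'.Reachable u w ∨ G'.Reachable v w) := by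
      intro x w p
      induction p with
      | nil => exact id
      | cons h' p ih => exact fun hx => ih (hstep _ _ h' hx)
    exact key p (Or.inl (Reachable.refl u))
  have hnuv : ¬ G'.Reachable u v := by
    intro hr
    apply hnc
    haveI := hconn.nonempty
    refine ⟨fun x y => ?_⟩
    have hux : ∀ z, G'.Reachable u z := by
      intro z
      rcases hdich z with h | h
      · exact h
      · exact hr.trans h
    exact (hux x).symm.trans (hux y)
  set A : Set V := {w | G'.Reachable u w} with hAdef
  set B : Set V := {w | G'.Reachable v w} with hBdef
  have hdisj : ∀ x, x ∈ A → x ∈ B → False := fun x hx hy => hnuv (hx.trans hy.symm)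
  have hAcl : ∀ ⦃x y⦄, x ∈ A → G'.Adj x y → y ∈ A := fun x y hx h => hx.trans h.reachable
  have hBcl : ∀ ⦃x y⦄, x ∈ B → G'.Adj x y → y ∈ B := fun x y hx h => hx.trans h.reachable
  have huA : u ∈ A := Reachable.refl _
  have hvB : v ∈ B := Reachable.refl _
  have hvA : v ∉ A := fun h => hnuv h
  have huB : u ∉ B := fun h => hnuv h.symm
  set HA := G'.induce A with hHAdef
  set HB := G'.induce B with hHBdef
  set a := HA.edgeSet.ncard with hadef
  set b := HB.edgeSet.ncard with hbdef
  -- edge counting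
  have himgA : (Sym2.map (Subtype.val : A → V) '' HA.edgeSet) ⊆ G'.edgeSet := by
    rintro z ⟨w, hw, rfl⟩
    induction w using Sym2.ind with
    | _ p q =>
      rw [Sym2.map_pair_eq, mem_edgeSet]
      exact hw
  have himgB : (Sym2.map (Subtype.val : B → V) '' HB.edgeSet) ⊆ G'.edgeSet := by
    rintro z ⟨w, hw, rfl⟩
    induction w using Sym2.ind with
    | _ p q =>
      rw [Sym2.map_pair_eq, mem_edgeSet]
      exact hw
  have himgdisj : Disjoint (Sym2.map (Subtype.val : A → V) '' HA.edgeSet)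
      (Sym2.map (Subtype.val : B → V) '' HB.edgeSet) := by
    rw [Set.disjoint_left]
    rintro z ⟨w, hw, rfl⟩ ⟨w', hw', hww'⟩
    induction w using Sym2.ind with
    | _ p q =>
    induction w' using Sym2.ind with
    | _ p' q' =>
    rw [Sym2.map_pair_eq, Sym2.map_pair_eq, Sym2.eq_iff] at hww'
    rcases hww' with ⟨h1, h2⟩ | ⟨h1, h2⟩
    · exact hdisj _ p.2 (h1 ▸ p'.2)
    · exact hdisj _ q.2 (h1 ▸ p'.2)
  have hab : a + b ≤ G'.edgeSet.ncard := by
    have hA' : (Sym2.map (Subtype.val : A → V) '' HA.edgeSet).ncard = a :=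
      Set.ncard_image_of_injective _ (Sym2.map.injective Subtype.val_injective)
    have hB' : (Sym2.map (Subtype.val : B → V) '' HB.edgeSet).ncard = b :=
      Set.ncard_image_of_injective _ (Sym2.map.injective Subtype.val_injective)
    calc a + b = (Sym2.map (Subtype.val : A → V) '' HA.edgeSet ∪
          Sym2.map (Subtype.val : B → V) '' HB.edgeSet).ncard := by
          rw [Set.ncard_union_eq himgdisj (Set.toFinite _) (Set.toFinite _), hA', hB']
      _ ≤ G'.edgeSet.ncard :=
          Set.ncard_le_ncard (Set.union_subset himgA himgB) (Set.toFinite _)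
  have hG'card : G'.edgeSet.ncard = G.edgeSet.ncard - 1 := by
    rw [hG'def, edgeSet_deleteEdges]
    exact Set.ncard_diff_singleton_of_mem he
  have hm1 : 1 ≤ G.edgeSet.ncard := by
    have : G.edgeSet.Nonempty := ⟨_, he⟩
    have := (Set.ncard_pos (Set.toFinite _)).mpr this
    omega
  have habn : a + b ≤ 4 * n - 3 := by omega
  set kA := (a + 5) / 4 with hkAdef
  set kB := (b + 5) / 4 with hkBdef
  have hkApos : 0 < kA := by omega
  have hkBpos : 0 < kB := by omega
  -- connectivity and cardinality of the pieces
  have hHAconn : HA.Connected := by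
    haveI : Nonempty A := ⟨⟨u, huA⟩⟩
    refine ⟨fun x y => ?_⟩
    obtain ⟨x, hx⟩ := x
    obtain ⟨y, hy⟩ := y
    exact reachable_induce hAcl (hx.symm.trans hy) hx hy
  have hHBconn : HB.Connected := by
    haveI : Nonempty B := ⟨⟨v, hvB⟩⟩
    refine ⟨fun x y => ?_⟩
    obtain ⟨x, hx⟩ := x
    obtain ⟨y, hy⟩ := y
    exact reachable_induce hBcl (hx.symm.trans hy) hx hy
  have hcardA : Nat.card A < Nat.card V := by
    rw [Nat.card_coe_set_eq, ← Set.ncard_univ]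
    exact Set.ncard_lt_ncard ⟨Set.subset_univ _, fun h => hvA (h (Set.mem_univ v))⟩
      (Set.toFinite _)
  have hcardB : Nat.card B < Nat.card V := by
    rw [Nat.card_coe_set_eq, ← Set.ncard_univ]
    exact Set.ncard_lt_ncard ⟨Set.subset_univ _, fun h => huB (h (Set.mem_univ u))⟩
      (Set.toFinite _)
  have hminA := hmin kA hkApos A inferInstance HA hHAconn (Or.inl hcardA) (by omega)
  have hminB := hmin kB hkBpos B inferInstance HB hHBconn (Or.inl hcardB) (by omega)
  rw [Arrows] at hminA hminB
  push_neg at hminA hminB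
  obtain ⟨RA, hRAle, hRAred, hRAblue⟩ := hminA
  obtain ⟨RB, hRBle, hRBred, hRBblue⟩ := hminB
  -- the combined colouring
  set R : SimpleGraph V :=
    { Adj := fun x y => (∃ (hx : x ∈ A) (hy : y ∈ A), RA.Adj ⟨x, hx⟩ ⟨y, hy⟩) ∨
        (∃ (hx : x ∈ B) (hy : y ∈ B), RB.Adj ⟨x, hx⟩ ⟨y, hy⟩)
      symm := by
        refine ⟨?_⟩
        rintro x y (⟨hx, hy, h⟩ | ⟨hx, hy, h⟩)
        · exact Or.inl ⟨hy, hx, h.symm⟩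
        · exact Or.inr ⟨hy, hx, h.symm⟩
      loopless := by
        refine ⟨?_⟩
        rintro x (⟨hx, hy, h⟩ | ⟨hx, hy, h⟩) <;> exact h.ne (Subtype.ext rfl) } with hRdef
  have hRadj : ∀ x y, R.Adj x y ↔ ((∃ (hx : x ∈ A) (hy : y ∈ A), RA.Adj ⟨x, hx⟩ ⟨y, hy⟩) ∨
      (∃ (hx : x ∈ B) (hy : y ∈ B), RB.Adj ⟨x, hx⟩ ⟨y, hy⟩)) := fun x y => Iff.rfl
  have hRleG : R ≤ G := by
    rintro x y (⟨hx, hy, h⟩ | ⟨hx, hy, h⟩)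
    · exact hG'le (hRAle h)
    · exact hG'le (hRBle h)
  rcases harrow R hRleG with ⟨f, hf⟩ | ⟨g, hg⟩
  · -- red case
    have hclA : ∀ x y, R.Adj x y → x ∈ A →
        ∃ (hx : x ∈ A) (hy : y ∈ A), RA.Adj ⟨x, hx⟩ ⟨y, hy⟩ := by
      rintro x y (⟨hx, hy, h⟩ | ⟨hx, hy, h⟩) hxA
      · exact ⟨hx, hy, h⟩
      · exact (hdisj x hxA hx).elim
    have hclB : ∀ x y, R.Adj x y → x ∈ B →
        ∃ (hx : x ∈ B) (hy : y ∈ B), RB.Adj ⟨x, hx⟩ ⟨y, hy⟩ := by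
      rintro x y (⟨hx, hy, h⟩ | ⟨hx, hy, h⟩) hxB
      · exact (hdisj x hx hxB).elim
      · exact ⟨hx, hy, h⟩
    set SA : Finset (Fin n) := Finset.univ.filter (fun i => (f (i, 0) : V) ∈ A) with hSA
    set SB : Finset (Fin n) := Finset.univ.filter (fun i => (f (i, 0) : V) ∈ B) with hSB
    have h1 : SA.card < kA := red_side hclA hRAred f hf SA
      (fun i hi => (Finset.mem_filter.mp hi).2)
    have h2 : SB.card < kB := red_side hclB hRBred f hf SB
      (fun i hi => (Finset.mem_filter.mp hi).2)
    have hcover : (Finset.univ : Finset (Fin n)) ⊆ SA ∪ SB := by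
      intro i _
      rw [Finset.mem_union, hSA, hSB, Finset.mem_filter, Finset.mem_filter]
      rcases hdich (f (i, 0)) with h | h
      · exact Or.inl ⟨Finset.mem_univ _, h⟩
      · exact Or.inr ⟨Finset.mem_univ _, h⟩
    have hn' : n ≤ SA.card + SB.card := by
      calc n = (Finset.univ : Finset (Fin n)).card := by simp
        _ ≤ (SA ∪ SB).card := Finset.card_le_card hcover
        _ ≤ SA.card + SB.card := Finset.card_union_le _ _
    omega
  · -- blue case
    have hadjcyc : ∀ p q : Fin 3, p ≠ q → (cycleGraph 3).Adj p q := by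
      intro p q h
      rw [cycleGraph_three_eq_top]
      exact h
    have hGadj : ∀ p q, p ≠ q → (G \ R).Adj (g p) (g q) := fun p q h =>
      g.map_adj (hadjcyc p q h)
    have hinj3 : ∀ p q : Fin 3, p ≠ q → g p ≠ g q := fun p q h hh => h (hg hh)
    have hG'adj : ∀ p q, p ≠ q → G'.Adj (g p) (g q) := by
      intro p q hpq
      have hG1 : G.Adj (g p) (g q) := (hGadj p q hpq).1
      rw [hG'def, deleteEdges_adj]
      refine ⟨hG1, ?_⟩
      intro hmem
      have heq : s((g p : V), g q) = s(u, v) := hmem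
      obtain ⟨r, hrp, hrq⟩ : ∃ r : Fin 3, r ≠ p ∧ r ≠ q := by
        have : ∀ p q : Fin 3, p ≠ q → ∃ r, r ≠ p ∧ r ≠ q := by decide
        exact this p q hpq
      have h1 : G.Adj (g r) (g p) := (hGadj r p hrp).1
      have h2 : G.Adj (g r) (g q) := (hGadj r q hrq).1
      rw [Sym2.eq_iff] at heq
      have hru : (g r : V) ≠ u ∧ (g r : V) ≠ v := by
        rcases heq with ⟨h3, h4⟩ | ⟨h3, h4⟩
        · exact ⟨h3 ▸ hinj3 r p hrp, h4 ▸ hinj3 r q hrq⟩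
        · exact ⟨h4 ▸ hinj3 r q hrq, h3 ▸ hinj3 r p hrp⟩
      have e1 : G'.Adj (g r) (g p) := by
        rw [hG'def, deleteEdges_adj]
        refine ⟨h1, ?_⟩
        intro hm
        have hm' : s((g r : V), g p) = s(u, v) := hm
        rw [Sym2.eq_iff] at hm'
        rcases hm' with ⟨h3, _⟩ | ⟨h3, _⟩
        · exact hru.1 h3
        · exact hru.2 h3
      have e2 : G'.Adj (g r) (g q) := by
        rw [hG'def, deleteEdges_adj]
        refine ⟨h2, ?_⟩
        intro hm
        have hm' : s((g r : V), g q) = s(u, v) := hm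
        rw [Sym2.eq_iff] at hm'
        rcases hm' with ⟨h3, _⟩ | ⟨h3, _⟩
        · exact hru.1 h3
        · exact hru.2 h3
      apply hnuv
      rcases heq with ⟨h3, h4⟩ | ⟨h3, h4⟩
      · rw [← h3, ← h4]
        exact e1.symm.reachable.trans e2.reachable
      · rw [← h4, ← h3]
        exact e2.symm.reachable.trans e1.reachable
    have hclblueA : ∀ x y, (G \ R).Adj x y → ∀ (hx : x ∈ A) (hy : y ∈ A),
        (HA \ RA).Adj ⟨x, hx⟩ ⟨y, hy⟩ := by
      intro x y hxy hx hy
      rw [sdiff_adj] at hxy ⊢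
      refine ⟨?_, ?_⟩
      · show G'.Adj x y
        rw [hG'def, deleteEdges_adj]
        refine ⟨hxy.1, ?_⟩
        intro hm
        have hm' : s(x, y) = s(u, v) := hm
        rw [Sym2.eq_iff] at hm'
        rcases hm' with ⟨_, h4⟩ | ⟨h3, _⟩
        · exact hvA (h4 ▸ hy)
        · exact hvA (h3 ▸ hx)
      · intro hRA
        exact hxy.2 (Or.inl ⟨hx, hy, hRA⟩)
    have hclblueB : ∀ x y, (G \ R).Adj x y → ∀ (hx : x ∈ B) (hy : y ∈ B),
        (HB \ RB).Adj ⟨x, hx⟩ ⟨y, hy⟩ := by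
      intro x y hxy hx hy
      rw [sdiff_adj] at hxy ⊢
      refine ⟨?_, ?_⟩
      · show G'.Adj x y
        rw [hG'def, deleteEdges_adj]
        refine ⟨hxy.1, ?_⟩
        intro hm
        have hm' : s(x, y) = s(u, v) := hm
        rw [Sym2.eq_iff] at hm'
        rcases hm' with ⟨h3, _⟩ | ⟨_, h4⟩
        · exact huB (h3 ▸ hx)
        · exact huB (h4 ▸ hy)
      · intro hRB
        exact hxy.2 (Or.inr ⟨hx, hy, hRB⟩)
    rcases hdich (g 0) with h0 | h0
    · have hall : ∀ p, (g p : V) ∈ A := by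
        intro p
        by_cases hp : p = 0
        · rw [hp]; exact h0
        · exact hAcl h0 (hG'adj 0 p (Ne.symm hp))
      exact hRAblue (blue_side hclblueA g hg hall)
    · have hall : ∀ p, (g p : V) ∈ B := by
        intro p
        by_cases hp : p = 0
        · rw [hp]; exact h0
        · exact hBcl h0 (hG'adj 0 p (Ne.symm hp))
      exact hRBblue (blue_side hclblueB g hg hall)
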